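/- Let θ ∈ S_n have left-to-right maxima at positions i₁ < ⋯ < i_k with values j₁ < ⋯ < j_k, and let σ ∈ S_{n−k} be the standardization of the word obtained from θ(1)⋯θ(n) by deleting the left-to-right maximal values. Then p(θ) = p(σ) + kn − k(k+1)/2 + Σ_{s=1}^{k} (j_s − i_s), where p(τ) = inv(τ) + m(m−1)/2 for τ ∈ S_m. -/

import Mathlib

/-- i is a position of a left-to-right maximum of σ. -/
def IsLRMax {n : ℕ} (σ : Equiv.Perm (Fin n)) (i : Fin n) : Prop :=
  ∀ h : Fin n, h < i → σ h < σ i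

instance {n : ℕ} (σ : Equiv.Perm (Fin n)) (i : Fin n) : Decidable (IsLRMax σ i) :=
  inferInstanceAs (Decidable (∀ h : Fin n, h < i → σ h < σ i))

/-- p(τ) = |{(i,j) : j < τ(i) or i > τ⁻¹(j)}| (= inv(τ) + m(m−1)/2). -/
def pCount {m : ℕ} (τ : Equiv.Perm (Fin m)) : ℕ :=
  (Finset.univ.filter (fun p : Fin m × Fin m => p.2 < τ p.1 ∨ τ⁻¹ p.2 < p.1)).card

open Finset

/-- Number of inversions of a permutation. -/
def invCount {m : ℕ} (τ : Equiv.Perm (Fin m)) : ℕ :=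
  (univ.filter (fun p : Fin m × Fin m => p.1 < p.2 ∧ τ p.2 < τ p.1)).card

lemma pCount_eq {m : ℕ} (τ : Equiv.Perm (Fin m)) :
    pCount τ = (univ.filter (fun p : Fin m × Fin m => p.2 < p.1)).card + invCount τ := by
  have h1 : pCount τ
      = (univ.filter (fun p : Fin m × Fin m => τ p.2 < τ p.1 ∨ p.2 < p.1)).card := by
    apply Finset.card_equiv (Equiv.prodCongr (Equiv.refl _) τ.symm)
    intro p
    simp [Equiv.Perm.inv_def, pCount]
  rw [h1]
  have h2 : (univ.filter (fun p : Fin m × Fin m => τ p.2 < τ p.1 ∨ p.2 < p.1))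
      = (univ.filter (fun p : Fin m × Fin m => p.2 < p.1))
        ∪ (univ.filter (fun p : Fin m × Fin m => p.1 < p.2 ∧ τ p.2 < τ p.1)) := by
    rw [← Finset.filter_or]
    apply Finset.filter_congr
    intro p _
    constructor
    · rintro (h | h)
      · rcases lt_trichotomy p.1 p.2 with h' | h' | h'
        · exact Or.inr ⟨h', h⟩
        · exact absurd (h' ▸ h) (lt_irrefl _)
        · exact Or.inl h'
      · exact Or.inl h
    · rintro (h | ⟨_, h⟩)
      · exact Or.inr h
      · exact Or.inl h
  rw [h2, Finset.card_union_of_disjoint, invCount]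
  rw [Finset.disjoint_left]
  intro p hp hq
  simp only [mem_filter] at hp hq
  exact absurd (hp.2.trans hq.2.1) (lt_irrefl _)

lemma T_card (m : ℕ) :
    (univ.filter (fun p : Fin m × Fin m => p.2 < p.1)).card * 2 = m * (m-1) := by
  have h := Finset.card_eq_sum_card_fiberwise
    (s := univ.filter (fun p : Fin m × Fin m => p.2 < p.1)) (t := (univ : Finset (Fin m)))
    (f := Prod.fst) (by intro x _; simp)
  rw [h]
  have h2 : ∀ i : Fin m,
      ((univ.filter (fun p : Fin m × Fin m => p.2 < p.1)).filter (fun p => p.1 = i)).card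
        = (i : ℕ) := by
    intro i
    rw [← (show (univ.filter (· < i)).card = (i:ℕ) by
      rw [show (univ.filter (· < i)) = Finset.Iio i by ext x; simp, Fin.card_Iio])]
    apply Finset.card_bij (fun p _ => p.2)
    · intro p hp; simp only [mem_filter, mem_univ] at hp ⊢; exact ⟨trivial, hp.2 ▸ hp.1.2⟩
    · intro p hp q hq hpq
      simp only [mem_filter] at hp hq
      exact Prod.ext (hp.2.trans hq.2.symm) hpq
    · intro b hb
      simp only [mem_filter] at hb
      exact ⟨(i, b), by simp [hb.2], rfl⟩
  simp only [h2]
  rw [Fin.sum_univ_eq_sum_range (fun i => i) m, Finset.sum_range_id_mul_two]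

lemma card_lt_val {n : ℕ} (θ : Equiv.Perm (Fin n)) (i : Fin n) :
    (univ.filter (fun h => θ h < θ i)).card = (θ i : ℕ) := by
  rw [← (show (univ.filter (· < θ i)).card = ((θ i):ℕ) by
    rw [show (univ.filter (· < θ i)) = Finset.Iio (θ i) by ext x; simp, Fin.card_Iio])]
  apply Finset.card_bij (fun h _ => θ h)
  · intro a ha; simp only [mem_filter, mem_univ, true_and] at ha ⊢; exact ha
  · intro a _ b _ hab; exact θ.injective hab
  · intro b hb
    simp only [mem_filter, mem_univ, true_and] at hb
    exact ⟨θ⁻¹ b, by simpa using hb, by simp⟩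

lemma fiber_card {n : ℕ} (θ : Equiv.Perm (Fin n)) (i : Fin n) (hi : IsLRMax θ i) :
    (univ.filter (fun h => i < h ∧ θ h < θ i)).card = (θ i : ℕ) - (i : ℕ) := by
  have hsplit : (univ.filter (fun h => θ h < θ i))
      = (univ.filter (· < i)) ∪ (univ.filter (fun h => i < h ∧ θ h < θ i)) := by
    rw [← Finset.filter_or]
    apply Finset.filter_congr
    intro h _
    constructor
    · intro hh
      rcases lt_trichotomy h i with h' | h' | h'
      · exact Or.inl h'
      · exact absurd (h' ▸ hh) (lt_irrefl _)
      · exact Or.inr ⟨h', hh⟩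
    · rintro (hh | ⟨_, hh⟩)
      · exact hi h hh
      · exact hh
  have hdisj : Disjoint (univ.filter (· < i)) (univ.filter (fun h => i < h ∧ θ h < θ i)) := by
    rw [Finset.disjoint_left]
    intro a ha hb
    simp only [mem_filter] at ha hb
    exact absurd (ha.2.trans hb.2.1) (lt_irrefl _)
  have := card_lt_val θ i
  rw [hsplit, Finset.card_union_of_disjoint hdisj,
    show (univ.filter (· < i)) = Finset.Iio i by ext x; simp, Fin.card_Iio] at this
  omega

lemma invA {n : ℕ} (θ : Equiv.Perm (Fin n)) :
    (univ.filter (fun p : Fin n × Fin n =>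
      (p.1 < p.2 ∧ θ p.2 < θ p.1) ∧ IsLRMax θ p.1)).card
      = ∑ i ∈ univ.filter (fun i => IsLRMax θ i), ((θ i : ℕ) - (i : ℕ)) := by
  rw [Finset.card_eq_sum_card_fiberwise
    (f := Prod.fst) (t := univ.filter (fun i => IsLRMax θ i))
    (by intro p hp; simp only [coe_filter, Set.mem_setOf_eq, mem_coe, mem_filter, mem_univ, true_and] at hp ⊢; exact hp.2)]
  apply Finset.sum_congr rfl
  intro i hi
  simp only [mem_filter, mem_univ, true_and] at hi
  rw [← fiber_card θ i hi]
  apply Finset.card_bij (fun p _ => p.2)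
  · intro p hp
    simp only [mem_filter, mem_univ, true_and] at hp ⊢
    exact ⟨hp.2 ▸ hp.1.1.1, hp.2 ▸ hp.1.1.2⟩
  · intro p hp q hq hpq
    simp only [mem_filter] at hp hq
    exact Prod.ext (hp.2.trans hq.2.symm) hpq
  · intro b hb
    simp only [mem_filter, mem_univ, true_and] at hb
    exact ⟨(i, b), by simp [hb.1, hb.2, hi], rfl⟩

lemma invB {n m : ℕ} (θ : Equiv.Perm (Fin n)) (σ : Equiv.Perm (Fin m))
    (g f : Fin m → Fin n) (hg : StrictMono g) (hf : StrictMono f)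
    (hrange : ∀ i : Fin n, ¬ IsLRMax θ i ↔ ∃ x, g x = i)
    (hσθ : ∀ x, θ (g x) = f (σ x)) :
    (univ.filter (fun p : Fin n × Fin n =>
      (p.1 < p.2 ∧ θ p.2 < θ p.1) ∧ ¬ IsLRMax θ p.1)).card = invCount σ := by
  rw [invCount]
  symm
  apply Finset.card_bij (fun p _ => (g p.1, g p.2))
  · intro p hp
    simp only [mem_filter, mem_univ, true_and] at hp ⊢
    refine ⟨⟨hg hp.1, ?_⟩, (hrange _).mpr ⟨p.1, rfl⟩⟩
    rw [hσθ, hσθ]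
    exact hf hp.2
  · intro p _ q _ hpq
    have h1 : g p.1 = g q.1 := congrArg Prod.fst hpq
    have h2 : g p.2 = g q.2 := congrArg Prod.snd hpq
    exact Prod.ext (hg.injective h1) (hg.injective h2)
  · intro b hb
    simp only [mem_filter, mem_univ, true_and] at hb
    obtain ⟨⟨h12, hv⟩, h1⟩ := hb
    have h2 : ¬ IsLRMax θ b.2 := by
      intro hmax
      exact absurd ((hmax b.1 h12).trans hv) (lt_irrefl _)
    obtain ⟨x, hx⟩ := (hrange _).mp h1
    obtain ⟨y, hy⟩ := (hrange _).mp h2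
    refine ⟨(x, y), ?_, by rw [hx, hy]⟩
    simp only [mem_filter, mem_univ, true_and]
    constructor
    · rw [← hg.lt_iff_lt, hx, hy]; exact h12
    · rw [← hf.lt_iff_lt, ← hσθ, ← hσθ, hx, hy]; exact hv

lemma arith_aux (k m : ℕ) : m*(m-1) + 2*(k*(k+m)) = (k+m)*(k+m-1) + k*(k+1) := by
  cases m with
  | zero =>
    cases k with
    | zero => rfl
    | succ j =>
      show 0*(0-1) + 2*((j+1)*((j+1)+0)) = ((j+1)+0)*((j+1)+0-1) + (j+1)*((j+1)+1)
      simp only [Nat.add_zero, Nat.add_sub_cancel]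
      ring
  | succ s =>
    show (s+1)*((s+1)-1) + 2*(k*(k+(s+1))) = (k+(s+1))*(k+(s+1)-1) + k*(k+1)
    have h1 : (s+1)-1 = s := rfl
    have h2 : k+(s+1)-1 = k+s := by omega
    rw [h1, h2]
    ring

/-- Let θ ∈ S_n have k left-to-right maxima, at positions i₁<…<i_k with values j₁<…<j_k,
and let σ ∈ S_{n−k} be the standardization of the word obtained from θ by deleting
the left-to-right maxima (σ is characterized by `hσ` via the order isomorphisms of the
remaining positions and values with Fin (n−k)). Then
p(θ) = p(σ) + kn − k(k+1)/2 + Σ (j_s − i_s). -/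
theorem stmt18 (n : ℕ) (θ : Equiv.Perm (Fin n)) (k : ℕ)
    (hk : (Finset.univ.filter (fun i : Fin n => IsLRMax θ i)).card = k)
    (hB : (Finset.univ.filter (fun i : Fin n => ¬ IsLRMax θ i)).card = n - k)
    (hV : ((Finset.univ.filter (fun i : Fin n => ¬ IsLRMax θ i)).image θ).card = n - k)
    (σ : Equiv.Perm (Fin (n - k)))
    (hσ : ∀ x : Fin (n - k),
      (((((Finset.univ.filter (fun i : Fin n => ¬ IsLRMax θ i)).image θ).orderIsoOfFin hV)
          (σ x) : Fin n))
        = θ ((((Finset.univ.filter (fun i : Fin n => ¬ IsLRMax θ i)).orderIsoOfFin hB)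
            x : Fin n))) :
    pCount θ = pCount σ + k * n - k * (k + 1) / 2
      + ∑ i ∈ Finset.univ.filter (fun i : Fin n => IsLRMax θ i),
          ((θ i : ℕ) - (i : ℕ)) := by
  have hkn : k ≤ n := by
    rw [← hk]
    exact (Finset.card_filter_le _ _).trans (by simp)
  -- the two order isomorphisms
  set Bset := Finset.univ.filter (fun i : Fin n => ¬ IsLRMax θ i) with hBdef
  set g : Fin (n-k) → Fin n := fun x => ((Bset.orderIsoOfFin hB x : Fin n)) with hgdef
  set f : Fin (n-k) → Fin n := fun v => (((Bset.image θ).orderIsoOfFin hV v : Fin n)) with hfdef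
  have hg : StrictMono g := fun a b hab =>
    Subtype.coe_lt_coe.mpr ((Bset.orderIsoOfFin hB).lt_iff_lt.mpr hab)
  have hf : StrictMono f := fun a b hab =>
    Subtype.coe_lt_coe.mpr (((Bset.image θ).orderIsoOfFin hV).lt_iff_lt.mpr hab)
  have hrange : ∀ i : Fin n, ¬ IsLRMax θ i ↔ ∃ x, g x = i := by
    intro i
    constructor
    · intro hi
      have hiB : i ∈ Bset := by simp [hBdef, hi]
      refine ⟨(Bset.orderIsoOfFin hB).symm ⟨i, hiB⟩, ?_⟩
      show ((Bset.orderIsoOfFin hB) ((Bset.orderIsoOfFin hB).symm ⟨i, hiB⟩) : Fin n) = i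
      rw [OrderIso.apply_symm_apply]
    · rintro ⟨x, rfl⟩
      have : g x ∈ Bset := (Bset.orderIsoOfFin hB x).2
      simpa [hBdef] using this
  have hσθ : ∀ x, θ (g x) = f (σ x) := fun x => (hσ x).symm
  -- decompose the inversion count of θ
  have hsplit := Finset.card_filter_add_card_filter_not
    (s := univ.filter (fun p : Fin n × Fin n => p.1 < p.2 ∧ θ p.2 < θ p.1))
    (p := fun p => IsLRMax θ p.1)
  rw [Finset.filter_filter, Finset.filter_filter] at hsplit
  rw [invA θ, invB θ σ g f hg hf hrange hσθ] at hsplit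
  -- counting identities
  have h1 := pCount_eq θ
  have h2 := pCount_eq σ
  have h3 := T_card n
  have h4 := T_card (n-k)
  have h5 := arith_aux k (n-k)
  rw [show k + (n-k) = n by omega] at h5
  rw [← h3, ← h4] at h5
  have hd2c : k*(k+1) ≤ 2*(k*n) := by
    rcases Nat.eq_zero_or_pos k with rfl | hkpos
    · simp
    · have hle : k + 1 ≤ 2*n := by omega
      calc k*(k+1) ≤ k*(2*n) := Nat.mul_le_mul_left k hle
      _ = 2*(k*n) := by ring
  have hinv : invCount θ = (∑ i ∈ Finset.univ.filter (fun i : Fin n => IsLRMax θ i),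
      ((θ i : ℕ) - (i : ℕ))) + invCount σ := hsplit.symm
  rw [h1, h2, hinv]
  clear h1 h2 h3 h4 hsplit hσθ hrange hσ hk hd2c hinv
  have hd2c : k*(k+1) ≤ 2*(k*n) := by
    rcases Nat.eq_zero_or_pos k with rfl | hkpos
    · simp
    · have hle : k + 1 ≤ 2*n := by omega
      calc k*(k+1) ≤ k*(2*n) := Nat.mul_le_mul_left k hle
      _ = 2*(k*n) := by ring
  generalize (∑ i ∈ Finset.univ.filter (fun i : Fin n => IsLRMax θ i),
      ((θ i : ℕ) - (i : ℕ))) = S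
  generalize hdq : k*(k+1) = d at h5 hd2c ⊢
  generalize hcq : k*n = c at h5 hd2c ⊢
  omega
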